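/- Let R be a Dedekind domain and I a nonzero non-principal ideal of R such that I is isomorphic to I⁻¹ as R-modules. Let A = M₂(R) be the 2×2 matrix algebra. Then Hom_R(A, I), with its natural left A-module structure, is isomorphic to A as a left A-module. -/

import Mathlib

open scoped nonZeroDivisors

open FractionalIdeal UniqueFactorizationMonoid

lemma exists_pair_aux (R : Type*) [CommRing R] [IsDomain R] [IsDedekindDomain R]
    (I : Ideal R) (hI0 : I ≠ ⊥) (hInp : ¬ Submodule.IsPrincipal I) :
    ∃ (a b : R) (x y : FractionRing R), a ∈ I ∧ b ∈ I ∧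
      x ∈ ((I : FractionalIdeal R⁰ (FractionRing R))⁻¹ : FractionalIdeal R⁰ (FractionRing R)) ∧
      y ∈ ((I : FractionalIdeal R⁰ (FractionRing R))⁻¹ : FractionalIdeal R⁰ (FractionRing R)) ∧
      algebraMap R (FractionRing R) a * x + algebraMap R (FractionRing R) b * y = 1 := by
  classical
  set K := FractionRing R
  set ι := algebraMap R K with hι
  -- pick a nonzero a ∈ I
  obtain ⟨a, haI, ha0⟩ := Submodule.exists_mem_ne_zero_of_ne_bot hI0
  have hspa_bot : Ideal.span {a} ≠ ⊥ := by
    simpa [Ideal.span_singleton_eq_bot] using ha0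
  have hspa_le : Ideal.span {a} ≤ I := by
    simpa [Ideal.span_le] using haI
  obtain ⟨J, hJ⟩ : ∃ J, Ideal.span {a} = I * J := Ideal.dvd_iff_le.mpr hspa_le
  -- the finite set of primes dividing (a)
  set S : Finset (Ideal R) := (normalizedFactors (Ideal.span {a})).toFinset with hS
  have hSmem : ∀ P : Ideal R, P ∈ S ↔ P.IsPrime ∧ Ideal.span {a} ≤ P := by
    intro P
    rw [hS, Multiset.mem_toFinset, Ideal.mem_normalizedFactors_iff hspa_bot]
  have hSprime : ∀ P ∈ S, Prime P := fun P hP =>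
    prime_of_normalized_factor P (Multiset.mem_toFinset.mp hP)
  set n : Ideal R → ℕ := fun P => (normalizedFactors I).count P with hn
  -- I is the product of its prime powers over S
  have hsub : (normalizedFactors I).toFinset ⊆ S := by
    intro P hP
    rw [Multiset.mem_toFinset, Ideal.mem_normalizedFactors_iff hI0] at hP
    exact (hSmem P).mpr ⟨hP.1, hspa_le.trans hP.2⟩
  have hIprod : I = ∏ P ∈ S, P ^ n P := by
    conv_lhs => rw [← prod_normalizedFactors_eq_self hI0]
    exact Finset.prod_multiset_count_of_subset _ _ hsub
  have hIle : ∀ P ∈ S, I ≤ P ^ n P := by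
    intro P hP
    rw [hIprod, ← Finset.mul_prod_erase _ _ hP]
    exact Ideal.mul_le_left
  -- choose elements of exact valuation
  have hex : ∀ P ∈ S, ∃ z ∈ P ^ n P, z ∉ P ^ (n P + 1) := fun P hP =>
    Ideal.exists_mem_pow_notMem_pow_succ P (hSprime P hP).ne_zero
      ((hSmem P).mp hP).1.ne_top (n P)
  choose z hz1 hz2 using hex
  -- CRT
  obtain ⟨b, hb⟩ := IsDedekindDomain.exists_forall_sub_mem_ideal (s := S)
    (fun P : Ideal R => P) (fun P => n P + 1) hSprime
    (fun i _ j _ hij => hij) (fun P => z P.1 P.2)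
  have hbmem : ∀ P (hP : P ∈ S), b ∈ P ^ n P := by
    intro P hP
    have := hb P hP
    have h1 : b - z P hP ∈ P ^ n P :=
      Ideal.pow_le_pow_right (Nat.le_succ _) this
    simpa using add_mem h1 (hz1 P hP)
  have hbnot : ∀ P (hP : P ∈ S), b ∉ P ^ (n P + 1) := by
    intro P hP hmem
    exact hz2 P hP (by simpa using sub_mem hmem (hb P hP))
  have hbI : b ∈ I := by
    rw [hIprod, ← IsDedekindDomain.inf_prime_pow_eq_prod S _ _ hSprime
      (fun i _ j _ hij => hij)]
    exact Submodule.mem_finsetInf.mpr fun P hP => hbmem P hP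
  have hbPI : ∀ P (hP : P ∈ S), b ∉ P * I := by
    intro P hP hmem
    apply hbnot P hP
    have : P * I ≤ P ^ (n P + 1) := by
      calc P * I ≤ P * P ^ n P := Ideal.mul_mono_right (hIle P hP)
      _ = P ^ (n P + 1) := (pow_succ' P (n P)).symm
    exact this hmem
  -- the complementary ideal of b
  have hspb_le : Ideal.span {b} ≤ I := by simpa [Ideal.span_le] using hbI
  obtain ⟨C, hC⟩ : ∃ C, Ideal.span {b} = I * C := Ideal.dvd_iff_le.mpr hspb_le
  -- coprimality of J and C
  have hJC : J ⊔ C = ⊤ := by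
    by_contra h
    obtain ⟨M, hMmax, hM⟩ := Ideal.exists_le_maximal _ h
    have hMS : M ∈ S := by
      refine (hSmem M).mpr ⟨hMmax.isPrime, ?_⟩
      calc Ideal.span {a} = I * J := hJ
        _ ≤ J := Ideal.mul_le_right
        _ ≤ M := le_trans le_sup_left hM
    refine hbPI M hMS ?_
    have : Ideal.span {b} ≤ M * I := by
      rw [hC, mul_comm]
      exact Ideal.mul_mono_left (le_trans le_sup_right hM)
    exact this (Ideal.mem_span_singleton_self b)
  -- extract the identity 1 = a x + b y
  obtain ⟨u, huJ, v, hvC, huv⟩ :=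
    Submodule.mem_sup.mp (hJC ▸ Submodule.mem_top : (1 : R) ∈ J ⊔ C)
  have hIne : (I : FractionalIdeal R⁰ K) ≠ 0 := by
    simpa [coeIdeal_eq_zero] using hI0
  have hJfrac : (J : FractionalIdeal R⁰ K) =
      spanSingleton R⁰ (ι a) * (I : FractionalIdeal R⁰ K)⁻¹ := by
    have h1 : (I : FractionalIdeal R⁰ K) * (J : FractionalIdeal R⁰ K) =
        spanSingleton R⁰ (ι a) := by
      rw [← coeIdeal_mul, ← hJ, coeIdeal_span_singleton]
    calc (J : FractionalIdeal R⁰ K)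
        = ((I : FractionalIdeal R⁰ K) * (I : FractionalIdeal R⁰ K)⁻¹) * J := by
          rw [mul_inv_cancel₀ hIne, one_mul]
      _ = (I : FractionalIdeal R⁰ K)⁻¹ * (I * J) := by ring
      _ = spanSingleton R⁰ (ι a) * (I : FractionalIdeal R⁰ K)⁻¹ := by
          rw [h1, mul_comm]
  have hCfrac : (C : FractionalIdeal R⁰ K) =
      spanSingleton R⁰ (ι b) * (I : FractionalIdeal R⁰ K)⁻¹ := by
    have h1 : (I : FractionalIdeal R⁰ K) * (C : FractionalIdeal R⁰ K) =
        spanSingleton R⁰ (ι b) := by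
      rw [← coeIdeal_mul, ← hC, coeIdeal_span_singleton]
    calc (C : FractionalIdeal R⁰ K)
        = ((I : FractionalIdeal R⁰ K) * (I : FractionalIdeal R⁰ K)⁻¹) * C := by
          rw [mul_inv_cancel₀ hIne, one_mul]
      _ = (I : FractionalIdeal R⁰ K)⁻¹ * (I * C) := by ring
      _ = spanSingleton R⁰ (ι b) * (I : FractionalIdeal R⁰ K)⁻¹ := by
          rw [h1, mul_comm]
  have hu' : ι u ∈ (J : FractionalIdeal R⁰ K) := mem_coeIdeal_of_mem R⁰ huJ
  have hv' : ι v ∈ (C : FractionalIdeal R⁰ K) := mem_coeIdeal_of_mem R⁰ hvC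
  rw [hJfrac, mem_singleton_mul] at hu'
  rw [hCfrac, mem_singleton_mul] at hv'
  obtain ⟨x, hx, hux⟩ := hu'
  obtain ⟨y, hy, hvy⟩ := hv'
  refine ⟨a, b, x, y, haI, hbI, hx, hy, ?_⟩
  rw [← hux, ← hvy, ← ι.map_add, huv, ι.map_one]

set_option maxHeartbeats 1000000 in
/-- If `R` is a Dedekind domain and `I` a nonzero non-principal ideal with `I ≅ I⁻¹`
as `R`-modules, then for `A = M₂(R)` we have `Hom_R(A, I) ≅ A` as left `A`-modules,
where the left `A`-module structure on `Hom_R(A, I)` is `(a·f)(x) = f(xa)`. -/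
theorem matrix_hom_into_ideal_iso (R : Type*) [CommRing R] [IsDomain R] [IsDedekindDomain R]
    (I : Ideal R) (hI0 : I ≠ ⊥) (hInp : ¬ Submodule.IsPrincipal I)
    (hinv : Nonempty (↥I ≃ₗ[R]
      ↥(((I : FractionalIdeal R⁰ (FractionRing R))⁻¹ : FractionalIdeal R⁰ (FractionRing R)) :
        Submodule R (FractionRing R)))) :
    ∃ Ψ : Matrix (Fin 2) (Fin 2) R ≃ₗ[R] (Matrix (Fin 2) (Fin 2) R →ₗ[R] ↥I),
      ∀ a x z : Matrix (Fin 2) (Fin 2) R, Ψ (a * x) z = Ψ x (z * a) := by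
  classical
  obtain ⟨a, b, x, y, ha, hb, hx, hy, heq⟩ := exists_pair_aux R I hI0 hInp
  obtain ⟨φ⟩ := hinv
  have hxm : x ∈ ((((I : FractionalIdeal R⁰ (FractionRing R))⁻¹ :
      FractionalIdeal R⁰ (FractionRing R))) : Submodule R (FractionRing R)) :=
    FractionalIdeal.mem_coe.mpr hx
  have hym : y ∈ ((((I : FractionalIdeal R⁰ (FractionRing R))⁻¹ :
      FractionalIdeal R⁰ (FractionRing R))) : Submodule R (FractionRing R)) :=
    FractionalIdeal.mem_coe.mpr hy
  let X := (⟨x, hxm⟩ : ↥((((I : FractionalIdeal R⁰ (FractionRing R))⁻¹ :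
      FractionalIdeal R⁰ (FractionRing R))) : Submodule R (FractionRing R)))
  let Y := (⟨y, hym⟩ : ↥((((I : FractionalIdeal R⁰ (FractionRing R))⁻¹ :
      FractionalIdeal R⁰ (FractionRing R))) : Submodule R (FractionRing R)))
  let A : ↥I := ⟨a, ha⟩
  let B : ↥I := ⟨b, hb⟩
  have hXv : (X : FractionRing R) = x := rfl
  have hYv : (Y : FractionRing R) = y := rfl
  have hAv : (A : R) = a := rfl
  have hBv : (B : R) = b := rfl
  have hinj : Function.Injective (algebraMap R (FractionRing R)) :=
    IsFractionRing.injective R (FractionRing R)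
  -- the forward map R² → I²
  let F : (Fin 2 → R) →ₗ[R] (Fin 2 → ↥I) :=
    { toFun := fun u => ![u 0 • A + u 1 • B, φ.symm (u 1 • X - u 0 • Y)]
      map_add' := by
        intro u v
        funext i
        fin_cases i
        · show (u + v) 0 • A + (u + v) 1 • B = (u 0 • A + u 1 • B) + (v 0 • A + v 1 • B)
          simp only [Pi.add_apply, add_smul]
          abel
        · show φ.symm ((u + v) 1 • X - (u + v) 0 • Y) =
            φ.symm (u 1 • X - u 0 • Y) + φ.symm (v 1 • X - v 0 • Y)
          rw [← φ.symm.map_add]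
          congr 1
          simp only [Pi.add_apply, add_smul]
          abel
      map_smul' := by
        intro c u
        funext i
        fin_cases i
        · show (c • u) 0 • A + (c • u) 1 • B = c • (u 0 • A + u 1 • B)
          simp only [Pi.smul_apply, smul_eq_mul, mul_smul, smul_add]
        · show φ.symm ((c • u) 1 • X - (c • u) 0 • Y) = c • φ.symm (u 1 • X - u 0 • Y)
          rw [← φ.symm.map_smul]
          congr 1
          simp only [Pi.smul_apply, smul_eq_mul, mul_smul, smul_sub] }
  have Fdef0 : ∀ u : Fin 2 → R, F u 0 = u 0 • A + u 1 • B := fun _ => rfl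
  have Fdef1 : ∀ u : Fin 2 → R, F u 1 = φ.symm (u 1 • X - u 0 • Y) := fun _ => rfl
  have hFinj : Function.Injective F := by
    rw [← LinearMap.ker_eq_bot, eq_bot_iff]
    intro u hu
    rw [LinearMap.mem_ker] at hu
    have h0 : u 0 • A + u 1 • B = 0 := by rw [← Fdef0 u, hu]; rfl
    have h1 : u 1 • X - u 0 • Y = 0 := by
      have h1' : φ.symm (u 1 • X - u 0 • Y) = 0 := by rw [← Fdef1 u, hu]; rfl
      exact (LinearEquiv.map_eq_zero_iff φ.symm).mp h1'
    have h0' : u 0 * a + u 1 * b = 0 := by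
      have := congrArg (Subtype.val) h0
      simpa [A, B, smul_eq_mul] using this
    have h1' : u 1 • x - u 0 • y = 0 := by
      have := congrArg (Subtype.val) h1
      simpa [X, Y] using this
    have e0 : algebraMap R (FractionRing R) (u 0) * algebraMap R (FractionRing R) a
        + algebraMap R (FractionRing R) (u 1) * algebraMap R (FractionRing R) b = 0 := by
      rw [← (algebraMap R (FractionRing R)).map_mul, ← (algebraMap R (FractionRing R)).map_mul,
        ← (algebraMap R (FractionRing R)).map_add, h0',
        (algebraMap R (FractionRing R)).map_zero]
    have e1 : algebraMap R (FractionRing R) (u 1) * x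
        - algebraMap R (FractionRing R) (u 0) * y = 0 := by
      rw [← Algebra.smul_def, ← Algebra.smul_def]
      exact h1'
    have hu0 : u 0 = 0 := by
      apply hinj
      rw [(algebraMap R (FractionRing R)).map_zero]
      linear_combination x * e0 - algebraMap R (FractionRing R) b * e1
        - algebraMap R (FractionRing R) (u 0) * heq
    have hu1 : u 1 = 0 := by
      apply hinj
      rw [(algebraMap R (FractionRing R)).map_zero]
      linear_combination y * e0 + algebraMap R (FractionRing R) a * e1
        - algebraMap R (FractionRing R) (u 1) * heq
    have : u = 0 := by
      funext i
      fin_cases i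
      · exact hu0
      · exact hu1
    simp [this]
  have hFsurj : Function.Surjective F := by
    intro v
    have hIne : (I : FractionalIdeal R⁰ (FractionRing R)) ≠ 0 := by
      simpa [FractionalIdeal.coeIdeal_eq_zero] using hI0
    have hmul : ∀ w : FractionRing R, w ∈ ((I : FractionalIdeal R⁰ (FractionRing R))⁻¹ :
        FractionalIdeal R⁰ (FractionRing R)) → ∀ r : R, r ∈ I →
        ∃ c : R, algebraMap R (FractionRing R) c = w * algebraMap R (FractionRing R) r := by
      intro w hw r hr
      have h1 : w * algebraMap R (FractionRing R) r ∈
          ((I : FractionalIdeal R⁰ (FractionRing R))⁻¹ * I :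
            FractionalIdeal R⁰ (FractionRing R)) :=
        FractionalIdeal.mul_mem_mul hw (FractionalIdeal.mem_coeIdeal_of_mem R⁰ hr)
      rw [mul_comm, mul_inv_cancel₀ hIne] at h1
      obtain ⟨c, hc⟩ := (FractionalIdeal.mem_one_iff R⁰).mp h1
      exact ⟨c, hc⟩
    obtain ⟨c1, hc1⟩ := hmul x hx (↑(v 0)) (v 0).2
    obtain ⟨c2, hc2⟩ := hmul (↑(φ (v 1))) (FractionalIdeal.mem_coe.mp (φ (v 1)).2) b hb
    obtain ⟨c3, hc3⟩ := hmul y hy (↑(v 0)) (v 0).2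
    obtain ⟨c4, hc4⟩ := hmul (↑(φ (v 1))) (FractionalIdeal.mem_coe.mp (φ (v 1)).2) a ha
    refine ⟨![c1 - c2, c3 + c4], ?_⟩
    funext i
    fin_cases i
    · show F ![c1 - c2, c3 + c4] 0 = v 0
      rw [Fdef0]
      apply Subtype.ext
      show (c1 - c2) • (A : R) + (c3 + c4) • (B : R) = (↑(v 0) : R)
      rw [hAv, hBv]
      apply hinj
      rw [smul_eq_mul, smul_eq_mul, (algebraMap R (FractionRing R)).map_add,
        (algebraMap R (FractionRing R)).map_mul, (algebraMap R (FractionRing R)).map_mul,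
        (algebraMap R (FractionRing R)).map_sub, (algebraMap R (FractionRing R)).map_add,
        hc1, hc2, hc3, hc4]
      linear_combination (algebraMap R (FractionRing R) (↑(v 0) : R)) * heq
    · show F ![c1 - c2, c3 + c4] 1 = v 1
      rw [Fdef1, LinearEquiv.symm_apply_eq]
      apply Subtype.ext
      show (c3 + c4) • (X : FractionRing R) - (c1 - c2) • (Y : FractionRing R)
        = (↑(φ (v 1)) : FractionRing R)
      rw [hXv, hYv, Algebra.smul_def, Algebra.smul_def,
        (algebraMap R (FractionRing R)).map_add, (algebraMap R (FractionRing R)).map_sub,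
        hc1, hc2, hc3, hc4]
      linear_combination (↑(φ (v 1)) : FractionRing R) * heq
  let G : (Fin 2 → R) ≃ₗ[R] (Fin 2 → ↥I) := LinearEquiv.ofBijective F ⟨hFinj, hFsurj⟩
  have hrowadd : ∀ (m m' : Matrix (Fin 2) (Fin 2) R) (i : Fin 2), (m + m') i = m i + m' i :=
    fun m m' i => funext fun l => Matrix.add_apply m m' i l
  have hrowsmul : ∀ (c : R) (m : Matrix (Fin 2) (Fin 2) R) (i : Fin 2), (c • m) i = c • (m i) :=
    fun c m i => funext fun l => Matrix.smul_apply c m i l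
  let g : Matrix (Fin 2) (Fin 2) R →ₗ[R] ↥I :=
    { toFun := fun m => F (m 0) 0 + F (m 1) 1
      map_add' := by
        intro m m'
        show F ((m + m') 0) 0 + F ((m + m') 1) 1 =
          (F (m 0) 0 + F (m 1) 1) + (F (m' 0) 0 + F (m' 1) 1)
        rw [hrowadd, hrowadd, F.map_add, F.map_add, Pi.add_apply, Pi.add_apply]
        abel
      map_smul' := by
        intro c m
        show F ((c • m) 0) 0 + F ((c • m) 1) 1 = c • (F (m 0) 0 + F (m 1) 1)
        rw [hrowsmul, hrowsmul, F.map_smul, F.map_smul, Pi.smul_apply, Pi.smul_apply, smul_add] }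
  have gdef : ∀ m, g m = F (m 0) 0 + F (m 1) 1 := fun _ => rfl
  let Φ : Matrix (Fin 2) (Fin 2) R →ₗ[R] (Matrix (Fin 2) (Fin 2) R →ₗ[R] ↥I) :=
    { toFun := fun m => g ∘ₗ LinearMap.mulRight R m
      map_add' := by
        intro m m'
        apply LinearMap.ext
        intro z
        show g (z * (m + m')) = g (z * m) + g (z * m')
        rw [mul_add, g.map_add]
      map_smul' := by
        intro c m
        apply LinearMap.ext
        intro z
        show g (z * (c • m)) = c • g (z * m)
        rw [mul_smul_comm, g.map_smul] }
  have Φdef : ∀ m z, Φ m z = g (z * m) := fun _ _ => rfl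
  -- computation of g on products with standard basis matrices
  have hg : ∀ (k j : Fin 2) (m : Matrix (Fin 2) (Fin 2) R),
      g (Matrix.single k j (1 : R) * m) = F (m j) k := by
    intro k j m
    fin_cases k
    · show g (Matrix.single (0 : Fin 2) j (1 : R) * m) = F (m j) 0
      have h0 : (Matrix.single (0 : Fin 2) j (1 : R) * m) 0 = m j := by
        funext l
        rw [Matrix.single_mul_apply_same, one_mul]
      have h1 : (Matrix.single (0 : Fin 2) j (1 : R) * m) 1 = 0 := by
        funext l
        rw [Matrix.single_mul_apply_of_ne]
        · rfl
        · exact one_ne_zero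
      rw [gdef, h0, h1, F.map_zero]
      show F (m j) 0 + (0 : Fin 2 → ↥I) 1 = F (m j) 0
      rw [Pi.zero_apply, add_zero]
    · show g (Matrix.single (1 : Fin 2) j (1 : R) * m) = F (m j) 1
      have h0 : (Matrix.single (1 : Fin 2) j (1 : R) * m) 0 = 0 := by
        funext l
        rw [Matrix.single_mul_apply_of_ne]
        · rfl
        · exact zero_ne_one
      have h1 : (Matrix.single (1 : Fin 2) j (1 : R) * m) 1 = m j := by
        funext l
        rw [Matrix.single_mul_apply_same, one_mul]
      rw [gdef, h0, h1, F.map_zero]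
      show (0 : Fin 2 → ↥I) 0 + F (m j) 1 = F (m j) 1
      rw [Pi.zero_apply, zero_add]
  have hΦinj : Function.Injective Φ := by
    intro m m' hmm
    have hrows : ∀ j : Fin 2, m j = m' j := by
      intro j
      apply hFinj
      funext k
      have h1 : Φ m (Matrix.single k j (1 : R)) =
          Φ m' (Matrix.single k j (1 : R)) := by rw [hmm]
      rw [Φdef, Φdef, hg, hg] at h1
      exact h1
    funext i l
    rw [hrows i]
  have hΦsurj : Function.Surjective Φ := by
    intro f
    refine ⟨Matrix.of fun j l => (G.symm fun k => f (Matrix.single k j (1 : R))) l, ?_⟩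
    apply Module.Basis.ext (Matrix.stdBasis R (Fin 2) (Fin 2))
    rintro ⟨k, j⟩
    rw [Matrix.stdBasis_eq_single]
    rw [Φdef, hg]
    have hm0 : (Matrix.of fun j l => (G.symm fun k => f (Matrix.single k j (1 : R))) l) j
        = G.symm fun k => f (Matrix.single k j (1 : R)) := rfl
    rw [hm0]
    have h2 : F (G.symm fun k => f (Matrix.single k j (1 : R))) =
        fun k => f (Matrix.single k j (1 : R)) :=
      G.apply_symm_apply _
    exact congrFun h2 k
  refine ⟨LinearEquiv.ofBijective Φ ⟨hΦinj, hΦsurj⟩, ?_⟩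
  intro a' x' z
  show Φ (a' * x') z = Φ x' (z * a')
  rw [Φdef, Φdef, mul_assoc]
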